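/- Let a, b, c be nonnegative real numbers with c² ≥ a² + b² and a ≥ b, and let α ≥ 2 be a real number. Then c^α ≥ a^α + (2^{α/2} − 1)·b^α. -/
import Mathlib

open Set

/-- Increasing increments for a convex function on `Ici 0`. -/
lemma convex_increments {f : ℝ → ℝ} (hf : ConvexOn ℝ (Set.Ici 0) f) {a b d : ℝ}
    (ha : 0 ≤ a) (hab : a ≤ b) (hd : 0 ≤ d) :
    f (a + d) + f b ≤ f a + f (b + d) := by
  rcases eq_or_lt_of_le (show a ≤ b + d by linarith) with h | h
  · have hd0 : d = 0 := by linarith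
    have hba : b = a := by linarith
    simp [hd0, hba]
  · set D : ℝ := b + d - a with hD
    have hDpos : 0 < D := by simp [hD]; linarith
    set l : ℝ := d / D with hl
    have hl0 : 0 ≤ l := div_nonneg hd hDpos.le
    have hl1 : l ≤ 1 := by
      rw [hl, div_le_one hDpos]; linarith
    have hmem1 : a ∈ Ici (0:ℝ) := ha
    have hmem2 : b + d ∈ Ici (0:ℝ) := by simp; linarith
    have e1 : (1 - l) * a + l * (b + d) = a + d := by
      have : l * D = d := by
        rw [hl]; field_simp
      nlinarith [this]
    have e2 : l * a + (1 - l) * (b + d) = b := by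
      have : l * D = d := by
        rw [hl]; field_simp
      nlinarith [this]
    have c1 := hf.2 hmem1 hmem2 (by linarith : (0:ℝ) ≤ 1 - l) hl0 (by ring)
    have c2 := hf.2 hmem1 hmem2 hl0 (by linarith : (0:ℝ) ≤ 1 - l) (by ring)
    simp only [smul_eq_mul] at c1 c2
    rw [e1] at c1
    rw [e2] at c2
    linarith

lemma key_ineq {u v t : ℝ} (hv : 0 ≤ v) (huv : v ≤ u) (ht : 1 ≤ t) :
    u ^ t + (2 ^ t - 1) * v ^ t ≤ (u + v) ^ t := by
  have hconv := convexOn_rpow ht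
  have h := convex_increments hconv hv huv hv
  have h2v : (v + v) ^ t = 2 ^ t * v ^ t := by
    rw [show v + v = 2 * v by ring, Real.mul_rpow (by norm_num) hv]
  rw [h2v] at h
  linarith

theorem lemma1_analytic (a b c α : ℝ) (ha : 0 ≤ a) (hb : 0 ≤ b) (hc : 0 ≤ c)
    (hcab : a ^ 2 + b ^ 2 ≤ c ^ 2) (hab : b ≤ a) (hα : 2 ≤ α) :
    c ^ α ≥ a ^ α + (2 ^ (α / 2) - 1) * b ^ α := by
  set t : ℝ := α / 2 with htdef
  have ht : 1 ≤ t := by rw [htdef]; linarith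
  have ht0 : 0 ≤ t := by linarith
  have hsq : ∀ x : ℝ, 0 ≤ x → (x ^ 2) ^ t = x ^ α := by
    intro x hx
    rw [← Real.rpow_natCast x 2, ← Real.rpow_mul hx]
    norm_num [htdef]
    ring_nf
  have hb2 : (0:ℝ) ≤ b ^ 2 := sq_nonneg b
  have hba2 : b ^ 2 ≤ a ^ 2 := by nlinarith
  have h1 := key_ineq hb2 hba2 ht
  have h2 : (a ^ 2 + b ^ 2) ^ t ≤ (c ^ 2) ^ t :=
    Real.rpow_le_rpow (by positivity) hcab ht0
  rw [hsq a ha, hsq c hc] at *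
  have h3 : (b ^ 2) ^ t = b ^ α := hsq b hb
  rw [h3] at h1
  linarith
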